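/- Let g : ℝ^d → ℝ be sublinear, σ ∈ ℝ^d, Σ_1, …, Σ_m ∈ ℝ^d and b ∈ ℝ^m. Suppose there exist w ∈ ℝ^m and W_1, …, W_m ∈ ℝ^d such that (i) ∑_{j=1}^m w_j + g(σ − ∑_{j=1}^m W_j) ≤ 1, (ii) g(W_j − Σ_j) − b_j ≤ w_j for all j, and (iii) g(W_j + Σ_j) + b_j ≤ w_j for all j. Then for every ζ ∈ ℝ^m with |ζ_j| ≤ 1 for all j, one has g(σ + ∑_{j=1}^m ζ_j Σ_j) + ⟨b, ζ⟩ ≤ 1. -/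

import Mathlib

private lemma g_sum_le {d : ℕ} {g : (Fin d → ℝ) → ℝ}
    (hg_add : ∀ x y, g (x + y) ≤ g x + g y)
    {ι : Type*} (s : Finset ι) (v : ι → (Fin d → ℝ)) (x : Fin d → ℝ) :
    g (x + ∑ j ∈ s, v j) ≤ g x + ∑ j ∈ s, g (v j) := by
  classical
  induction s using Finset.induction with
  | empty => simp
  | insert a s hni ih =>
    rw [Finset.sum_insert hni, Finset.sum_insert hni]
    calc g (x + (v a + ∑ j ∈ s, v j)) = g ((x + ∑ j ∈ s, v j) + v a) := by ring_nf
      _ ≤ g (x + ∑ j ∈ s, v j) + g (v a) := hg_add _ _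
      _ ≤ (g x + ∑ j ∈ s, g (v j)) + g (v a) := by linarith
      _ = g x + (g (v a) + ∑ j ∈ s, g (v j)) := by ring

/-- Roos et al. safe approximation for the box uncertainty set: feasibility of the
auxiliary system `(w, W)` implies the robust constraint
`g (σ + ∑ j ζ j • Σ j) + ⟨b, ζ⟩ ≤ 1` for all `ζ` with `|ζ j| ≤ 1`. -/
theorem roos_approximation_box {d m : ℕ}
    (g : (Fin d → ℝ) → ℝ)
    (hg_add : ∀ x y, g (x + y) ≤ g x + g y)
    (hg_smul : ∀ t : ℝ, 0 ≤ t → ∀ x, g (t • x) = t * g x)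
    (σ : Fin d → ℝ) (A : Fin m → (Fin d → ℝ)) (b : Fin m → ℝ)
    (w : Fin m → ℝ) (W : Fin m → (Fin d → ℝ))
    (h1 : ∑ j, w j + g (σ - ∑ j, W j) ≤ 1)
    (h2 : ∀ j, g (W j - A j) - b j ≤ w j)
    (h3 : ∀ j, g (W j + A j) + b j ≤ w j) :
    ∀ ζ : Fin m → ℝ, (∀ j, |ζ j| ≤ 1) →
      g (σ + ∑ j, ζ j • A j) + ∑ j, b j * ζ j ≤ 1 := by
  intro ζ hζ
  -- key per-coordinate bound
  have key : ∀ j, g (W j + ζ j • A j) + b j * ζ j ≤ w j := by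
    intro j
    have h1j := abs_le.mp (hζ j)
    set t := (1 + ζ j) / 2 with ht
    set s := (1 - ζ j) / 2 with hs
    have ht0 : 0 ≤ t := by simp [ht]; linarith [h1j.1]
    have hs0 : 0 ≤ s := by simp [hs]; linarith [h1j.2]
    have hdecomp : W j + ζ j • A j = t • (W j + A j) + s • (W j - A j) := by
      funext i
      simp [ht, hs, Pi.add_apply, Pi.sub_apply, smul_eq_mul]
      ring
    have hb : b j * ζ j = t * b j - s * b j := by rw [ht, hs]; ring
    calc g (W j + ζ j • A j) + b j * ζ j
        = g (t • (W j + A j) + s • (W j - A j)) + (t * b j - s * b j) := by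
          rw [hdecomp, hb]
      _ ≤ (g (t • (W j + A j)) + g (s • (W j - A j))) + (t * b j - s * b j) := by
          linarith [hg_add (t • (W j + A j)) (s • (W j - A j))]
      _ = t * (g (W j + A j) + b j) + s * (g (W j - A j) - b j) := by
          rw [hg_smul t ht0, hg_smul s hs0]; ring
      _ ≤ t * w j + s * w j := by
          have := h3 j; have := h2 j
          nlinarith [mul_le_mul_of_nonneg_left (h3 j) ht0,
            mul_le_mul_of_nonneg_left (h2 j) hs0]
      _ = w j := by rw [ht, hs]; ring
  have hsplit : σ + ∑ j, ζ j • A j = (σ - ∑ j, W j) + ∑ j, (W j + ζ j • A j) := by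
    rw [Finset.sum_add_distrib]
    abel
  have hmain : g (σ + ∑ j, ζ j • A j) ≤
      g (σ - ∑ j, W j) + ∑ j, g (W j + ζ j • A j) := by
    rw [hsplit]
    exact g_sum_le hg_add _ _ _
  have hsum : ∑ j, (g (W j + ζ j • A j) + b j * ζ j) ≤ ∑ j, w j :=
    Finset.sum_le_sum fun j _ => key j
  rw [Finset.sum_add_distrib] at hsum
  linarith
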